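/- Let ν : ℝ → [0,∞) be an integrable function and let φ : ℝ → ℝ be continuously differentiable with bounded derivative. Then ∬_{ℝ×ℝ} ((φ(x) − φ(y))/(x − y)) ν(x) ν(y) dx dy = ∫_ℝ φ'(p) (∫_ℝ ∫_0^1 ν(p − t q) ν(p − t q + q) dt dq) dp, where the difference quotient is understood as φ'(x) when x = y. (Doubling-of-variables identity used to derive the characterization of critical profiles.) -/

import Mathlib

open MeasureTheory Real

lemma aux_diffquot (φ : ℝ → ℝ) (hφ : ContDiff ℝ 1 φ) (x y : ℝ) :
    (if x = y then deriv φ x else (φ x - φ y) / (x - y)) =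
      ∫ t in (0:ℝ)..1, deriv φ (x + t * (y - x)) := by
  have hφd : Differentiable ℝ φ := hφ.differentiable one_ne_zero
  have hfc : Continuous (deriv φ) := hφ.continuous_deriv le_rfl
  have hderiv : ∀ t : ℝ, HasDerivAt (fun s => φ (x + s * (y - x)))
      ((y - x) * deriv φ (x + t * (y - x))) t := by
    intro t
    have h1 : HasDerivAt (fun s : ℝ => x + s * (y - x)) (y - x) t := by
      simpa using ((hasDerivAt_id t).mul_const (y - x)).const_add x
    have h2 := (hφd (x + t * (y - x))).hasDerivAt
    simpa [mul_comm, Function.comp_def] using h2.comp t h1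
  have hint : ∫ t in (0:ℝ)..1, (y - x) * deriv φ (x + t * (y - x)) =
      φ (x + 1 * (y - x)) - φ (x + 0 * (y - x)) := by
    apply intervalIntegral.integral_eq_sub_of_hasDerivAt (fun t _ => hderiv t)
    exact (Continuous.intervalIntegrable (continuous_const.mul (hfc.comp (by continuity))) 0 1)
  rw [intervalIntegral.integral_const_mul] at hint
  have hint' : (y - x) * ∫ t in (0:ℝ)..1, deriv φ (x + t * (y - x)) = φ y - φ x := by
    simpa using hint
  by_cases hxy : x = y
  · subst hxy; simp
  · rw [if_neg hxy, div_eq_iff (sub_ne_zero.mpr hxy)]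
    linear_combination hint'

lemma aux_mp (t : ℝ) : MeasurePreserving
    (fun z : ℝ × ℝ => (z.1 - t * z.2, z.1 - t * z.2 + z.2))
    (volume : Measure (ℝ × ℝ)) volume := by
  have swapMP : MeasurePreserving Prod.swap (volume : Measure (ℝ × ℝ)) volume := by
    rw [Measure.volume_eq_prod ℝ ℝ]; exact Measure.measurePreserving_swap
  have hshear1 : MeasurePreserving (fun z : ℝ × ℝ => (z.1, z.2 - t * z.1))
      (volume : Measure (ℝ × ℝ)) volume := by
    rw [Measure.volume_eq_prod ℝ ℝ]
    exact MeasurePreserving.skew_product (g := fun x y => y - t * x)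
      (MeasurePreserving.id _) (by fun_prop)
      (Filter.Eventually.of_forall fun x => by
        simpa [sub_eq_add_neg] using map_add_right_eq_self (volume : Measure ℝ) (-(t * x)))
  have hshear2 : MeasurePreserving (fun z : ℝ × ℝ => (z.1, z.1 + z.2))
      (volume : Measure (ℝ × ℝ)) volume := by
    rw [Measure.volume_eq_prod ℝ ℝ]
    exact MeasurePreserving.skew_product (g := fun x y => x + y)
      (MeasurePreserving.id _) (by fun_prop)
      (Filter.Eventually.of_forall fun x => map_add_left_eq_self (volume : Measure ℝ) x)
  have := hshear2.comp (swapMP.comp (hshear1.comp swapMP))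
  simpa [Function.comp_def] using this

/-- Doubling-of-variables identity: for an integrable nonnegative `ν` and a `C¹`
function `φ` with bounded derivative,
`∬ ((φ(x)−φ(y))/(x−y)) ν(x)ν(y) dx dy
  = ∫ φ'(p) (∫_ℝ ∫₀¹ ν(p−tq) ν(p−tq+q) dt dq) dp`,
where the difference quotient is read as `φ'(x)` on the diagonal. -/
theorem doubling_of_variables_identity (ν φ : ℝ → ℝ)
    (hν0 : ∀ x, 0 ≤ ν x) (hν : Integrable ν)
    (hφ : ContDiff ℝ 1 φ)
    (hbd : ∃ C : ℝ, ∀ x, |deriv φ x| ≤ C) :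
    (∫ p : ℝ × ℝ,
        (if p.1 = p.2 then deriv φ p.1 else (φ p.1 - φ p.2) / (p.1 - p.2)) *
          ν p.1 * ν p.2) =
      ∫ p : ℝ, deriv φ p *
        ∫ q : ℝ, ∫ t in (0 : ℝ)..1, ν (p - t * q) * ν (p - t * q + q) := by
  obtain ⟨C₀, hC₀⟩ := hbd
  set f := deriv φ with hfdef
  set C := max C₀ 0 with hCdef
  have hC : ∀ x, |f x| ≤ C := fun x => (hC₀ x).trans (le_max_left _ _)
  have hfc : Continuous f := hφ.continuous_deriv le_rfl
  set I : Set ℝ := Set.Ioc (0:ℝ) 1 with hIdef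
  set μI : Measure ℝ := volume.restrict I with hμIdef
  haveI : IsFiniteMeasure μI := by
    constructor
    rw [hμIdef, Measure.restrict_apply_univ, hIdef, Real.volume_Ioc]
    norm_num
  set G : ℝ × (ℝ × ℝ) → ℝ :=
    fun w => f (w.2.1 + w.1 * (w.2.2 - w.2.1)) * (ν w.2.1 * ν w.2.2) with hGdef
  set Φ : ℝ × (ℝ × ℝ) → ℝ × (ℝ × ℝ) :=
    fun w => (w.1, (w.2.1 - w.1 * w.2.2, w.2.1 - w.1 * w.2.2 + w.2.2)) with hΦdef
  set μP : Measure (ℝ × (ℝ × ℝ)) := μI.prod volume with hmuPdef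
  -- integrability of G
  have hνν : Integrable (fun z : ℝ × ℝ => ν z.1 * ν z.2) (volume : Measure (ℝ × ℝ)) := by
    rw [Measure.volume_eq_prod ℝ ℝ]; exact hν.mul_prod hν
  have hGm : AEStronglyMeasurable G μP := by
    have h1 : AEStronglyMeasurable (fun w : ℝ × (ℝ × ℝ) => ν w.2.1 * ν w.2.2) μP :=
      hνν.aestronglyMeasurable.comp_quasiMeasurePreserving Measure.quasiMeasurePreserving_snd
    have h2 : Continuous fun w : ℝ × (ℝ × ℝ) => f (w.2.1 + w.1 * (w.2.2 - w.2.1)) := by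
      apply hfc.comp; fun_prop
    exact h2.aestronglyMeasurable.mul h1
  have hBound : Integrable (fun w : ℝ × (ℝ × ℝ) => C * ((1:ℝ) * (ν w.2.1 * ν w.2.2))) μP :=
    ((integrable_const (1:ℝ)).mul_prod hνν).const_mul C
  have hG : Integrable G μP := by
    apply hBound.mono' hGm
    apply Filter.Eventually.of_forall
    intro w
    have hnn : 0 ≤ ν w.2.1 * ν w.2.2 := mul_nonneg (hν0 _) (hν0 _)
    rw [hGdef]
    simp only [one_mul]
    calc |f (w.2.1 + w.1 * (w.2.2 - w.2.1)) * (ν w.2.1 * ν w.2.2)|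
        = |f (w.2.1 + w.1 * (w.2.2 - w.2.1))| * (ν w.2.1 * ν w.2.2) := by
          rw [abs_mul, abs_of_nonneg hnn]
      _ ≤ C * (ν w.2.1 * ν w.2.2) := mul_le_mul_of_nonneg_right (hC _) hnn
  -- measure preserving Φ
  have hΦ : MeasurePreserving Φ μP μP := by
    rw [hmuPdef]
    exact MeasurePreserving.skew_product
      (g := fun t (z : ℝ × ℝ) => (z.1 - t * z.2, z.1 - t * z.2 + z.2))
      (MeasurePreserving.id _) (by fun_prop)
      (Filter.Eventually.of_forall fun t => (aux_mp t).map_eq)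
  have hΦemb : MeasurableEmbedding Φ := by
    rw [hΦdef]
    let e : (ℝ × ℝ × ℝ) ≃ₜ (ℝ × ℝ × ℝ) :=
      { toFun := fun w => (w.1, w.2.1 - w.1 * w.2.2, w.2.1 - w.1 * w.2.2 + w.2.2)
        invFun := fun w => (w.1, w.2.1 + w.1 * (w.2.2 - w.2.1), w.2.2 - w.2.1)
        left_inv := by
          rintro ⟨t, p, q⟩
          simp only [Prod.mk.injEq]
          refine ⟨trivial, by ring, by ring⟩
        right_inv := by
          rintro ⟨t, p, q⟩
          simp only [Prod.mk.injEq]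
          refine ⟨trivial, by ring, by ring⟩
        continuous_toFun := by fun_prop
        continuous_invFun := by fun_prop }
    exact e.measurableEmbedding
  have hGΦ : Integrable (fun w => G (Φ w)) μP :=
    (hΦ.integrable_comp hGm).mpr hG
  have hGΦeq : ∀ t : ℝ, ∀ z : ℝ × ℝ, G (Φ (t, z)) =
      f z.1 * (ν (z.1 - t * z.2) * ν (z.1 - t * z.2 + z.2)) := by
    intro t z
    rw [hΦdef, hGdef]
    have : z.1 - t * z.2 + t * (z.1 - t * z.2 + z.2 - (z.1 - t * z.2)) = z.1 := by ring
    simp only [this]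
  calc (∫ p : ℝ × ℝ,
        (if p.1 = p.2 then f p.1 else (φ p.1 - φ p.2) / (p.1 - p.2)) * ν p.1 * ν p.2)
      = ∫ z : ℝ × ℝ, ∫ t in I, G (t, z) := by
        refine integral_congr_ae (Filter.Eventually.of_forall fun z => ?_)
        beta_reduce
        rw [show (if z.1 = z.2 then f z.1 else (φ z.1 - φ z.2) / (z.1 - z.2)) =
            ∫ t in (0:ℝ)..1, f (z.1 + t * (z.2 - z.1)) from aux_diffquot φ hφ z.1 z.2, mul_assoc,
          intervalIntegral.integral_of_le zero_le_one, ← integral_mul_const]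
    _ = ∫ w, G w ∂μP := (integral_prod_symm G hG).symm
    _ = ∫ w, G (Φ w) ∂μP := (hΦ.integral_comp hΦemb G).symm
    _ = ∫ z : ℝ × ℝ, ∫ t in I, G (Φ (t, z)) := integral_prod_symm _ hGΦ
    _ = ∫ z : ℝ × ℝ, f z.1 * ∫ t in I, ν (z.1 - t * z.2) * ν (z.1 - t * z.2 + z.2) := by
        refine integral_congr_ae (Filter.Eventually.of_forall fun z => ?_)
        beta_reduce
        simp only [hGΦeq]
        rw [integral_const_mul]
    _ = ∫ p : ℝ, ∫ q : ℝ, f p * ∫ t in I, ν (p - t * q) * ν (p - t * q + q) := by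
        have hint2 : Integrable
            (fun z : ℝ × ℝ => f z.1 * ∫ t in I, ν (z.1 - t * z.2) * ν (z.1 - t * z.2 + z.2))
            ((volume : Measure ℝ).prod volume) := by
          rw [← Measure.volume_eq_prod ℝ ℝ]
          have := hGΦ.integral_prod_right
          refine this.congr (Filter.Eventually.of_forall fun z => ?_)
          simp only [hGΦeq]
          rw [integral_const_mul]
        rw [Measure.volume_eq_prod ℝ ℝ]
        exact integral_prod _ hint2
    _ = ∫ p : ℝ, f p *
        ∫ q : ℝ, ∫ t in (0 : ℝ)..1, ν (p - t * q) * ν (p - t * q + q) := by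
        refine integral_congr_ae (Filter.Eventually.of_forall fun p => ?_)
        beta_reduce
        rw [← integral_const_mul]
        refine integral_congr_ae (Filter.Eventually.of_forall fun q => ?_)
        beta_reduce
        rw [intervalIntegral.integral_of_le zero_le_one]
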